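/- Let A be a row circular binary matrix satisfying the standard assumptions. If v and v' are adjacent vertices of Q*(A), then | |supp(v)| − |supp(v')| | ≤ 1. -/

import Mathlib

open Finset

/-- Support of a vector. -/
def supp {n : ℕ} (x : Fin n → ℝ) : Set (Fin n) := {j | x j ≠ 0}

/-- Support of the `t`-th row of a matrix. -/
def rowSupp {m n : ℕ} (A : Matrix (Fin m) (Fin n) ℝ) (t : Fin m) : Set (Fin n) :=
  {j | A t j ≠ 0}

def IsBinaryMatrix {m n : ℕ} (A : Matrix (Fin m) (Fin n) ℝ) : Prop :=
  ∀ t j, A t j = 0 ∨ A t j = 1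

def IsBinaryVec {n : ℕ} (x : Fin n → ℝ) : Prop := ∀ j, x j = 0 ∨ x j = 1

/-- The polyhedron `{x | A x ≥ b, x ≥ 0}`. -/
def polyP {m n : ℕ} (A : Matrix (Fin m) (Fin n) ℝ) (b : Fin m → ℝ) : Set (Fin n → ℝ) :=
  {x | (∀ i, b i ≤ ∑ j, A i j * x j) ∧ ∀ j, 0 ≤ x j}

/-- The linear relaxation `Q(A) = {x | A x ≥ 1, x ≥ 0}`. -/
def polyQ {m n : ℕ} (A : Matrix (Fin m) (Fin n) ℝ) : Set (Fin n → ℝ) :=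
  {x | (∀ i, 1 ≤ ∑ j, A i j * x j) ∧ ∀ j, 0 ≤ x j}

/-- The set covering polyhedron `Q*(A)`: convex hull of nonnegative integer solutions of
`A x ≥ 1`. -/
def Qstar {m n : ℕ} (A : Matrix (Fin m) (Fin n) ℝ) : Set (Fin n → ℝ) :=
  convexHull ℝ {x | (∀ j, ∃ k : ℕ, x j = k) ∧ ∀ i, 1 ≤ ∑ j, A i j * x j}

/-- A vertex of a convex set is an extreme point. -/
def IsVertex {n : ℕ} (S : Set (Fin n → ℝ)) (v : Fin n → ℝ) : Prop :=
  v ∈ S.extremePoints ℝ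

/-- Two distinct vertices are adjacent when they lie on a common edge, i.e. the segment
joining them is a face (extreme subset) of `S`. -/
def AdjacentVerts {n : ℕ} (S : Set (Fin n → ℝ)) (v w : Fin n → ℝ) : Prop :=
  v ≠ w ∧ IsVertex S v ∧ IsVertex S w ∧ IsExtreme ℝ S (segment ℝ v w)

/-- There is a row support `C` with `C ∩ supp v = {p}` and `C ∩ supp v' = {p'}`. -/
def jsgEdge {m n : ℕ} (A : Matrix (Fin m) (Fin n) ℝ) (v v' : Fin n → ℝ)
    (p p' : Fin n) : Prop :=
  ∃ t, rowSupp A t ∩ supp v = {p} ∧ rowSupp A t ∩ supp v' = {p'}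

/-- The joint saturation graph of `v` and `v'` with respect to `A`. -/
def JSG {m n : ℕ} (A : Matrix (Fin m) (Fin n) ℝ) (v v' : Fin n → ℝ) :
    SimpleGraph (Fin n) where
  Adj p p' := p ≠ p' ∧ (jsgEdge A v v' p p' ∨ jsgEdge A v v' p' p)
  symm := ⟨fun p p' h => ⟨h.1.symm, h.2.symm⟩⟩
  loopless := ⟨fun p h => h.1 rfl⟩

/-- The node set of the joint saturation graph: the symmetric difference of the supports. -/
def jsgNodes {n : ℕ} (v v' : Fin n → ℝ) : Set (Fin n) :=
  (supp v \ supp v') ∪ (supp v' \ supp v)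

def JSGConnected {m n : ℕ} (A : Matrix (Fin m) (Fin n) ℝ) (v v' : Fin n → ℝ) : Prop :=
  ∀ p ∈ jsgNodes v v', ∀ q ∈ jsgNodes v v', (JSG A v v').Reachable p q

/-- One of the two partite sets is contained in a single connected component. -/
def JSGPartiteConnected {m n : ℕ} (A : Matrix (Fin m) (Fin n) ℝ) (v v' : Fin n → ℝ) : Prop :=
  (∀ p ∈ supp v \ supp v', ∀ q ∈ supp v \ supp v', (JSG A v v').Reachable p q) ∨
  (∀ p ∈ supp v' \ supp v, ∀ q ∈ supp v' \ supp v, (JSG A v v').Reachable p q)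

/-- Exactly two components, one of which is an isolated node. -/
def JSGAlmostConnected {m n : ℕ} (A : Matrix (Fin m) (Fin n) ℝ) (v v' : Fin n → ℝ) : Prop :=
  ∃ q ∈ jsgNodes v v', (∀ p, ¬ (JSG A v v').Adj q p) ∧ (jsgNodes v v' \ {q}).Nonempty ∧
    ∀ p ∈ jsgNodes v v' \ {q}, ∀ r ∈ jsgNodes v v' \ {q}, (JSG A v v').Reachable p r

/-- The (directed) circular arc from `i` to `j` in `Fin n`. -/
def arc {n : ℕ} [NeZero n] (i j : Fin n) : Set (Fin n) :=
  {k | ∃ h : ℕ, h ≤ ((j - i : Fin n) : ℕ) ∧ k = i + (Fin.ofNat n h : Fin n)}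

/-- A matrix is row circular if each row support is a circular arc. -/
def RowCircular {m n : ℕ} [NeZero n] (A : Matrix (Fin m) (Fin n) ℝ) : Prop :=
  ∀ t, ∃ i j : Fin n, rowSupp A t = arc i j

/-- The standard assumptions: binary, no dominating rows, between 2 and n-1 ones per row,
no all-zero or all-one column. -/
def StandardAssumptions {m n : ℕ} (A : Matrix (Fin m) (Fin n) ℝ) : Prop :=
  IsBinaryMatrix A ∧
  (∀ s t : Fin m, s ≠ t → ¬ rowSupp A s ⊆ rowSupp A t) ∧
  (∀ t, 2 ≤ (rowSupp A t).ncard ∧ (rowSupp A t).ncard ≤ n - 1) ∧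
  (∀ j : Fin n, (∃ t, A t j ≠ 0) ∧ (∃ t, A t j = 0))

/-- `a` and `b` occur consecutively (in either order) in the list `l`. -/
def ListConsec {α : Type*} (l : List α) (a b : α) : Prop :=
  ∃ k : ℕ, (l[k]? = some a ∧ l[k+1]? = some b) ∨ (l[k]? = some b ∧ l[k+1]? = some a)

/-- `a` and `b` occur cyclically consecutively (in either order) in the list `l`. -/
def CycConsec {α : Type*} (l : List α) (a b : α) : Prop :=
  ∃ k : ℕ, k < l.length ∧
    ((l[k]? = some a ∧ l[(k+1) % l.length]? = some b) ∨
     (l[k]? = some b ∧ l[(k+1) % l.length]? = some a))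

/-- The set `S` induces a path (possibly a single node) in `G`. -/
def IsPathOn {n : ℕ} (G : SimpleGraph (Fin n)) (S : Set (Fin n)) : Prop :=
  ∃ l : List (Fin n), l.Nodup ∧ (∀ x, x ∈ S ↔ x ∈ l) ∧
    (∀ a b, a ∈ S → G.Adj a b → ListConsec l a b) ∧
    (∀ a b, ListConsec l a b → G.Adj a b)

/-- The set `S` induces a cycle in `G`. -/
def IsCycleOn {n : ℕ} (G : SimpleGraph (Fin n)) (S : Set (Fin n)) : Prop :=
  ∃ l : List (Fin n), 3 ≤ l.length ∧ l.Nodup ∧ (∀ x, x ∈ S ↔ x ∈ l) ∧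
    (∀ a b, a ∈ S → G.Adj a b → CycConsec l a b) ∧
    (∀ a b, CycConsec l a b → G.Adj a b)

/-- `p` and `q` are cyclically consecutive elements of `S`. -/
def CyclConsecIn {n : ℕ} [NeZero n] (S : Set (Fin n)) (p q : Fin n) : Prop :=
  p ≠ q ∧ p ∈ S ∧ q ∈ S ∧ (arc p q ∩ S = {p, q} ∨ arc q p ∩ S = {p, q})

/-- The circulant matrix `C(n,2)` with row supports `{t, t+1}` (mod n). -/
def Cn2 (n : ℕ) [NeZero n] : Matrix (Fin n) (Fin n) ℝ :=
  fun t j => if j = t ∨ j = t + 1 then 1 else 0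

/-- Append a row to a matrix. -/
def appendRow {m n : ℕ} (A : Matrix (Fin m) (Fin n) ℝ) (a : Fin n → ℝ) :
    Matrix (Fin (m+1)) (Fin n) ℝ :=
  fun t j => if h : (t : ℕ) < m then A ⟨t, h⟩ j else a j

/-- A set of points is integral if all its extreme points are integer vectors. -/
def IsIntegralSet {n : ℕ} (S : Set (Fin n → ℝ)) : Prop :=
  ∀ x ∈ S.extremePoints ℝ, ∀ j, ∃ z : ℤ, x j = z

/-- A binary matrix is minimally nonideal if `Q(A)` is not integral but both restrictions
`Q(A) ∩ {x_i = 0}` and `Q(A) ∩ {x_i = 1}` are integral for every coordinate `i`. -/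
def MinimallyNonideal {m n : ℕ} (A : Matrix (Fin m) (Fin n) ℝ) : Prop :=
  ¬ IsIntegralSet (polyQ A) ∧
  ∀ i : Fin n, IsIntegralSet (polyQ A ∩ {x | x i = 0}) ∧
               IsIntegralSet (polyQ A ∩ {x | x i = 1})

/-- The matrix of the degenerate projective plane with `t+1` points and lines. -/
def Jmat (t : ℕ) : Matrix (Fin (t+1)) (Fin (t+1)) ℝ :=
  fun i j => if i = 0 then (if j = 0 then 0 else 1) else (if j = 0 ∨ j = i then 1 else 0)

/-- `A` is isomorphic to some degenerate projective plane matrix `J_t`, `t ≥ 2`. -/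
def IsoToDegenProjPlane {m n : ℕ} (A : Matrix (Fin m) (Fin n) ℝ) : Prop :=
  ∃ t : ℕ, 2 ≤ t ∧ ∃ (σ : Fin m ≃ Fin (t+1)) (τ : Fin n ≃ Fin (t+1)),
    ∀ i j, A i j = Jmat t (σ i) (τ j)

/-- `A₁` is the core of `A`: a square nonsingular row submatrix with `r` ones per row and
per column, all other rows of `A` having more than `r` ones. -/
def IsCore {m n : ℕ} (A : Matrix (Fin m) (Fin n) ℝ) (A₁ : Matrix (Fin n) (Fin n) ℝ)
    (r : ℕ) : Prop :=
  2 ≤ r ∧ A₁.det ≠ 0 ∧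
  (∃ f : Fin n → Fin m, Function.Injective f ∧ (∀ i, A₁ i = A (f i)) ∧
    ∀ t, t ∉ Set.range f → r < (rowSupp A t).ncard) ∧
  (∀ i, (rowSupp A₁ i).ncard = r) ∧ (∀ j, {i | A₁ i j ≠ 0}.ncard = r)

/-- `B₁` is the core of the blocker of `A`: a square nonsingular matrix whose rows are
binary vertices of `Q*(A)` with `s` ones per row and per column, all other binary
vertices of `Q*(A)` having more than `s` ones. -/
def IsBlockerCore {m n : ℕ} (A : Matrix (Fin m) (Fin n) ℝ) (B₁ : Matrix (Fin n) (Fin n) ℝ)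
    (s : ℕ) : Prop :=
  2 ≤ s ∧ B₁.det ≠ 0 ∧
  (∀ i, IsBinaryVec (B₁ i) ∧ IsVertex (Qstar A) (B₁ i)) ∧
  Function.Injective (fun i => B₁ i) ∧
  (∀ i, (rowSupp B₁ i).ncard = s) ∧ (∀ j, {i | B₁ i j ≠ 0}.ncard = s) ∧
  (∀ x, IsBinaryVec x → IsVertex (Qstar A) x → (∀ i, x ≠ B₁ i) → s < (supp x).ncard)

/-- `w^i` for `n = 3ν`: the complement of the characteristic vector of the residue class
`i` mod 3. -/
def wVec (n : ℕ) (i : Fin 3) : Fin n → ℝ :=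
  fun k => if (k : ℕ) % 3 = (i : ℕ) then 0 else 1

/-- `a^i` for `n = 3ν`: the characteristic vector of the residue class `i` mod 3
(`a¹ = (1,0,0,1,0,0,…)` corresponds to `i = 0`). -/
def aVec (n : ℕ) (i : ℕ) : Fin n → ℝ :=
  fun k => if (k : ℕ) % 3 = i then 1 else 0

open Fin.NatCast Fin.CommRing

namespace Stmt12Aux

variable {n : ℕ} [NeZero n]

/-- Clockwise distance from `a` to `b`. -/
def dval (a b : Fin n) : ℕ := ((b - a : Fin n) : ℕ)

lemma dval_lt (a b : Fin n) : dval a b < n := (b - a).isLt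

@[simp] lemma dval_self (a : Fin n) : dval a a = 0 := by simp [dval]

lemma dval_eq_zero (a b : Fin n) (h : dval a b = 0) : a = b := by
  have : b - a = 0 := Fin.ext h
  linear_combination (norm := module) -this

lemma dval_tri (a b c : Fin n) :
    dval a c = dval a b + dval b c ∨ dval a c + n = dval a b + dval b c := by
  have h : (c - a : Fin n) = (b - a) + (c - b) := by ring
  have hv : dval a c = (dval a b + dval b c) % n := by
    rw [dval, h, Fin.val_add]; rfl
  have h1 := dval_lt a b
  have h2 := dval_lt b c
  rcases Nat.lt_or_ge (dval a b + dval b c) n with hlt | hge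
  · left; rw [hv, Nat.mod_eq_of_lt hlt]
  · right
    have : dval a b + dval b c - n < n := by omega
    rw [hv, Nat.mod_eq_sub_mod hge, Nat.mod_eq_of_lt this]
    omega

lemma two_le_of_ne {a b : Fin n} (h : a ≠ b) : 2 ≤ n := by
  by_contra hn
  have h1 : a.val < n := a.isLt
  have h2 : b.val < n := b.isLt
  exact h (Fin.ext (by omega))

lemma dval_succ (a : Fin n) (hn : 2 ≤ n) : dval a (a + 1) = 1 := by
  have : (a + 1) - a = (1 : Fin n) := by ring
  rw [dval, this, Fin.val_one']
  exact Nat.mod_eq_of_lt hn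

lemma dval_inj {c a b : Fin n} (h : dval c a = dval c b) : a = b := by
  have : a - c = b - c := Fin.ext h
  linear_combination (norm := module) this

/-- `dval (c+1) c1 ≤ n - 2` when `c ≠ c1`. -/
lemma dval_le_sub_two {c c1 : Fin n} (h : c ≠ c1) : dval (c + 1) c1 ≤ n - 2 := by
  have hn : 2 ≤ n := two_le_of_ne h
  have h1 : dval c (c + 1) = 1 := dval_succ c hn
  rcases dval_tri c (c + 1) c1 with ht | ht
  · have := dval_lt c c1
    have := dval_lt (c + 1) c1
    by_contra hc
    have h0 : dval c c1 = 0 := by omega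
    exact h (dval_eq_zero c c1 h0)
  · have := dval_lt c c1
    have := dval_lt (c + 1) c1
    by_contra hc
    have h0 : dval c c1 = 0 := by omega
    exact h (dval_eq_zero c c1 h0)

lemma mem_arc_iff {i j x : Fin n} : x ∈ arc i j ↔ dval i x ≤ dval i j := by
  have hrfl : dval i j = ((j - i : Fin n) : ℕ) := rfl
  constructor
  · rintro ⟨h, hh, rfl⟩
    rw [hrfl] at *
    have hlt : h < n := lt_of_le_of_lt hh (dval_lt i j)
    have : dval i (i + (h : Fin n)) = h := by
      have : (i + (h : Fin n)) - i = (h : Fin n) := by ring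
      rw [dval, this, Fin.val_natCast, Nat.mod_eq_of_lt hlt]
    rw [Fin.ofNat_eq_cast]; omega
  · intro h
    exact ⟨dval i x, h, by rw [dval, Fin.ofNat_eq_cast, Fin.cast_val_eq_self (x - i)]; ring⟩

section NextPrev

variable (W : Set (Fin n)) (c : Fin n)

lemma nextEx (hW : W.Nonempty) : ∃ k : ℕ, c + 1 + (k : Fin n) ∈ W := by
  obtain ⟨w, hw⟩ := hW
  exact ⟨dval (c + 1) w, by rw [dval, Fin.cast_val_eq_self (w - (c+1))]; simpa using hw⟩

lemma prevEx (hW : W.Nonempty) : ∃ k : ℕ, c - (k : Fin n) ∈ W := by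
  obtain ⟨w, hw⟩ := hW
  exact ⟨dval w c, by rw [dval, Fin.cast_val_eq_self (c - w)]; simpa using hw⟩

noncomputable def nextIn (hW : W.Nonempty) : Fin n :=
  c + 1 + ((@Nat.find _ (Classical.decPred _) (nextEx W c hW) : ℕ) : Fin n)

noncomputable def prevIn (hW : W.Nonempty) : Fin n :=
  c - ((@Nat.find _ (Classical.decPred _) (prevEx W c hW) : ℕ) : Fin n)

lemma nextIn_mem (hW : W.Nonempty) : nextIn W c hW ∈ W := @Nat.find_spec _ (Classical.decPred _) (nextEx W c hW)

lemma prevIn_mem (hW : W.Nonempty) : prevIn W c hW ∈ W := @Nat.find_spec _ (Classical.decPred _) (prevEx W c hW)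

lemma dval_find_next {k : ℕ} (hk : k < n) : dval (c + 1) (c + 1 + (k : Fin n)) = k := by
  have : (c + 1 + (k : Fin n)) - (c + 1) = (k : Fin n) := by ring
  rw [dval, this, Fin.val_natCast, Nat.mod_eq_of_lt hk]

lemma dval_find_prev {k : ℕ} (hk : k < n) : dval (c - (k : Fin n)) c = k := by
  have : c - (c - (k : Fin n)) = (k : Fin n) := by ring
  rw [dval, this, Fin.val_natCast, Nat.mod_eq_of_lt hk]

lemma nextIn_min (hW : W.Nonempty) {w : Fin n} (hw : w ∈ W) :
    dval (c + 1) (nextIn W c hW) ≤ dval (c + 1) w := by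
  have hP : c + 1 + ((dval (c + 1) w : ℕ) : Fin n) ∈ W := by
    rw [dval, Fin.cast_val_eq_self (w - (c+1))]; simpa using hw
  have hfind := @Nat.find_min' _ (Classical.decPred _) (nextEx W c hW) _ hP
  have hlt : (@Nat.find _ (Classical.decPred _) (nextEx W c hW)) < n :=
    lt_of_le_of_lt hfind (dval_lt _ _)
  rw [nextIn, dval_find_next c hlt]
  exact hfind

lemma prevIn_min (hW : W.Nonempty) {w : Fin n} (hw : w ∈ W) :
    dval (prevIn W c hW) c ≤ dval w c := by
  have hP : c - ((dval w c : ℕ) : Fin n) ∈ W := by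
    rw [dval, Fin.cast_val_eq_self (c - w)]; simpa using hw
  have hfind := @Nat.find_min' _ (Classical.decPred _) (prevEx W c hW) _ hP
  have hlt : (@Nat.find _ (Classical.decPred _) (prevEx W c hW)) < n :=
    lt_of_le_of_lt hfind (dval_lt _ _)
  rw [prevIn, dval_find_prev c hlt]
  exact hfind

lemma prevIn_self (hW : W.Nonempty) (hc : c ∈ W) : prevIn W c hW = c := by
  have := prevIn_min W c hW hc
  simp only [dval_self, Nat.le_zero] at this
  exact dval_eq_zero _ _ this

lemma nextIn_eq_of_subset (hW : W.Nonempty) {T : Set (Fin n)} (hT : T.Nonempty) (hTW : T ⊆ W)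
    (h : nextIn W c hW ∈ T) : nextIn T c hT = nextIn W c hW := by
  have h1 : dval (c + 1) (nextIn T c hT) ≤ dval (c + 1) (nextIn W c hW) :=
    nextIn_min T c hT h
  have h2 : dval (c + 1) (nextIn W c hW) ≤ dval (c + 1) (nextIn T c hT) :=
    nextIn_min W c hW (hTW (nextIn_mem T c hT))
  exact dval_inj (le_antisymm h1 h2)

end NextPrev

end Stmt12Aux

namespace Stmt12Aux

variable {n : ℕ} [NeZero n]

lemma dval_succ_rev (a : Fin n) (hn : 2 ≤ n) : dval (a + 1) a = n - 1 := by
  have h1 := dval_succ a hn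
  have h2 := dval_tri a (a + 1) a
  have h3 := dval_lt (a + 1) a
  simp only [dval_self] at h2
  omega

lemma arc_trans {a b d q x : Fin n} (hd : dval a d ≤ dval a b) (hq : dval a q ≤ dval a b)
    (hdq : dval a d ≤ dval a q) (hx : dval d x ≤ dval d q) : dval a x ≤ dval a b := by
  have t1 := dval_tri a d q
  have t2 := dval_tri a d x
  have := dval_lt a b; have := dval_lt a d; have := dval_lt a q; have := dval_lt a x
  have := dval_lt d x; have := dval_lt d q
  omega

lemma zcov {W V V' : Set (Fin n)} (hW : W.Nonempty)
    (hVW : V ⊆ W) (hV'W : V' ⊆ W) (hWVV' : W ⊆ V ∪ V')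
    {c0 c1 : Fin n} (hne : c0 ≠ c1)
    (hs1 : ¬(prevIn W c1 hW ∈ V ∧ prevIn W c1 hW ∉ V' ∧
             nextIn W c1 hW ∈ V' ∧ nextIn W c1 hW ∉ V))
    (hs0 : ¬(prevIn W c0 hW ∈ V' ∧ prevIn W c0 hW ∉ V ∧
             nextIn W c0 hW ∈ V ∧ nextIn W c0 hW ∉ V'))
    {a b d q : Fin n} (hd : d ∈ arc a b) (hq : q ∈ arc a b) (hdV : d ∈ V) (hqV' : q ∈ V')
    (hVS : ∀ x, x ∈ arc a b → x ∈ V → x ∈ arc (c0+1) c1)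
    (hV'S : ∀ x, x ∈ arc a b → x ∈ V' → x ∉ arc (c0+1) c1) : False := by
  have hn : 2 ≤ n := two_le_of_ne hne
  have hd' : dval a d ≤ dval a b := mem_arc_iff.mp hd
  have hq' : dval a q ≤ dval a b := mem_arc_iff.mp hq
  have hδ : dval (c0+1) d ≤ dval (c0+1) c1 := mem_arc_iff.mp (hVS d hd hdV)
  have hκ0 : ¬ (dval (c0+1) q ≤ dval (c0+1) c1) := fun h => hV'S q hq hqV' (mem_arc_iff.mpr h)
  have hκ : dval (c0+1) c1 + 1 ≤ dval (c0+1) q := by omega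
  clear hκ0
  have hA2 : dval (c0+1) c1 ≤ n - 2 := dval_le_sub_two hne
  have hLq := dval_lt (c0+1) q
  have hLd := dval_lt (c0+1) d
  have hLA := dval_lt (c0+1) c1
  have hsucc1 := dval_succ c1 hn
  have E5 : dval (c0+1) (c1+1) = dval (c0+1) c1 + 1 := by
    have := dval_tri (c0+1) c1 (c1+1); have := dval_lt (c0+1) (c1+1); omega
  have E6 : dval (c1+1) q = dval (c0+1) q - dval (c0+1) c1 - 1 := by
    have := dval_tri (c0+1) (c1+1) q; have := dval_lt (c1+1) q; omega
  rcases le_or_gt (dval a d) (dval a q) with hcw | hccw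
  · -- clockwise case: blocked at cut c1
    set a1 := prevIn W c1 hW with ha1def
    set b1 := nextIn W c1 hW with hb1def
    have hk : dval a1 c1 ≤ dval d c1 := prevIn_min W c1 hW (hVW hdV)
    have hk' : dval (c1+1) b1 ≤ dval (c1+1) q := nextIn_min W c1 hW (hV'W hqV')
    have E1 : dval d c1 = dval (c0+1) c1 - dval (c0+1) d := by
      have := dval_tri (c0+1) d c1; have := dval_lt d c1; omega
    have E2 : dval d q = dval (c0+1) q - dval (c0+1) d := by
      have := dval_tri (c0+1) d q; have := dval_lt d q; omega
    have E3 : dval d a1 = dval d c1 - dval a1 c1 := by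
      have := dval_tri d a1 c1; have := dval_lt d a1; have := dval_lt a1 c1; omega
    have E4 : dval (c0+1) a1 = dval (c0+1) c1 - dval a1 c1 := by
      have := dval_tri (c0+1) d a1; have := dval_lt (c0+1) a1; omega
    have E7 : dval (c0+1) b1 = dval (c0+1) c1 + 1 + dval (c1+1) b1 := by
      have := dval_tri (c0+1) (c1+1) b1; have := dval_lt (c0+1) b1; omega
    have E8 : dval c1 b1 = 1 + dval (c1+1) b1 := by
      have := dval_tri c1 (c1+1) b1; have := dval_lt c1 b1; omega
    have E9 : dval d b1 = dval d c1 + 1 + dval (c1+1) b1 := by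
      have := dval_tri d c1 b1; have := dval_lt d b1; omega
    have ha1arc : a1 ∈ arc a b := mem_arc_iff.mpr (arc_trans hd' hq' hcw (by omega))
    have ha1S : a1 ∈ arc (c0+1) c1 := mem_arc_iff.mpr (by omega)
    have ha1V' : a1 ∉ V' := fun h => hV'S a1 ha1arc h ha1S
    have ha1V : a1 ∈ V := by
      rcases hWVV' (prevIn_mem W c1 hW) with h | h
      · exact h
      · exact absurd h ha1V'
    have hb1arc : b1 ∈ arc a b := mem_arc_iff.mpr (arc_trans hd' hq' hcw (by omega))
    have hb1S : b1 ∉ arc (c0+1) c1 := fun h => by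
      have := mem_arc_iff.mp h; omega
    have hb1V : b1 ∉ V := fun h => hb1S (hVS b1 hb1arc h)
    have hb1V' : b1 ∈ V' := by
      rcases hWVV' (nextIn_mem W c1 hW) with h | h
      · exact absurd h hb1V
      · exact h
    exact hs1 ⟨ha1V, ha1V', hb1V', hb1V⟩
  · -- counterclockwise case: blocked at cut c0
    set a0 := prevIn W c0 hW with ha0def
    set b0 := nextIn W c0 hW with hb0def
    have hk0 : dval a0 c0 ≤ dval q c0 := prevIn_min W c0 hW (hV'W hqV')
    have hk0' : dval (c0+1) b0 ≤ dval (c0+1) d := nextIn_min W c0 hW (hVW hdV)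
    have hsucc0 := dval_succ c0 hn
    have F2 : dval (c0+1) c0 = n - 1 := dval_succ_rev c0 hn
    have F3 : dval (c1+1) c0 = n - 2 - dval (c0+1) c1 := by
      have := dval_tri (c0+1) (c1+1) c0; have := dval_lt (c1+1) c0; omega
    have F4 : dval c0 d = 1 + dval (c0+1) d := by
      have := dval_tri c0 (c0+1) d; have := dval_lt c0 d; omega
    have F5 : dval (c1+1) d = n - 1 - dval (c0+1) c1 + dval (c0+1) d := by
      have := dval_tri (c1+1) c0 d; have := dval_lt (c1+1) d; omega
    have F6 : dval q c0 = n - 1 - dval (c0+1) q := by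
      have := dval_tri (c1+1) q c0; have := dval_lt q c0; omega
    have F7 : dval q d = n + dval (c0+1) d - dval (c0+1) q := by
      have := dval_tri (c1+1) q d; have := dval_lt q d; omega
    have F8 : dval q a0 = dval q c0 - dval a0 c0 := by
      have := dval_tri q a0 c0; have := dval_lt q a0; have := dval_lt a0 c0; omega
    have F9 : dval (c1+1) a0 = dval (c1+1) c0 - dval a0 c0 := by
      have := dval_tri (c1+1) q a0; have := dval_lt (c1+1) a0; omega
    have F10 : dval (c0+1) c1 + 1 ≤ dval (c0+1) a0 := by
      have := dval_tri (c0+1) (c1+1) a0; have := dval_lt (c0+1) a0; omega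
    have F11 : dval c0 b0 = 1 + dval (c0+1) b0 := by
      have := dval_tri c0 (c0+1) b0; have := dval_lt c0 b0; omega
    have F12 : dval q b0 = dval q c0 + 1 + dval (c0+1) b0 := by
      have := dval_tri q c0 b0; have := dval_lt q b0; omega
    have ha0arc : a0 ∈ arc a b := mem_arc_iff.mpr (arc_trans hq' hd' (le_of_lt hccw) (by omega))
    have ha0S : a0 ∉ arc (c0+1) c1 := fun h => by
      have := mem_arc_iff.mp h; omega
    have ha0V : a0 ∉ V := fun h => ha0S (hVS a0 ha0arc h)
    have ha0V' : a0 ∈ V' := by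
      rcases hWVV' (prevIn_mem W c0 hW) with h | h
      · exact absurd h ha0V
      · exact h
    have hb0arc : b0 ∈ arc a b := mem_arc_iff.mpr (arc_trans hq' hd' (le_of_lt hccw) (by omega))
    have hb0S : b0 ∈ arc (c0+1) c1 := mem_arc_iff.mpr (by omega)
    have hb0V' : b0 ∉ V' := fun h => hV'S b0 hb0arc h hb0S
    have hb0V : b0 ∈ V := by
      rcases hWVV' (nextIn_mem W c0 hW) with h | h
      · exact h
      · exact absurd h hb0V'
    exact hs0 ⟨ha0V', ha0V, hb0V, hb0V'⟩

end Stmt12Aux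

namespace Stmt12Aux

variable {n : ℕ} [NeZero n]

lemma dval_succ_ne {x t : Fin n} (hn : 2 ≤ n) (htx : t ≠ x) :
    dval (x+1) t ≤ n - 2 ∧ dval x t = 1 + dval (x+1) t := by
  have h1 := dval_succ x hn
  have h2 := dval_tri x (x+1) t
  have h3 := dval_lt (x+1) t
  have h4 := dval_lt x t
  have h5 : dval x t ≠ 0 := fun h => htx (dval_eq_zero x t h).symm
  omega

lemma nextIn_inj {T : Set (Fin n)} (hT : T.Nonempty) {x x' : Fin n}
    (hx : x ∈ T) (hx' : x' ∈ T) (h : nextIn T x hT = nextIn T x' hT) : x = x' := by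
  by_contra hne
  have hn : 2 ≤ n := two_le_of_ne hne
  have M1 : dval (x+1) (nextIn T x hT) ≤ dval (x+1) x' := nextIn_min T x hT hx'
  have M2 : dval (x'+1) (nextIn T x hT) ≤ dval (x'+1) x := by
    rw [h]; exact nextIn_min T x' hT hx
  have A1 := dval_tri (x+1) x' (nextIn T x hT)
  have hs1 := dval_succ x hn
  have hs2 := dval_succ x' hn
  have B1 := dval_tri x' (x'+1) (nextIn T x hT)
  have C1 := dval_tri (x+1) x' x
  have H : dval (x+1) x = n - 1 := dval_succ_rev x hn
  have hxx' : dval x x' = 1 + dval (x+1) x' ∧ dval (x+1) x' ≤ n - 2 := by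
    have := dval_succ_ne hn (show x' ≠ x from fun e => hne e.symm)
    exact ⟨this.2, this.1⟩
  have hx'x : dval x' x = 1 + dval (x'+1) x ∧ dval (x'+1) x ≤ n - 2 := by
    have := dval_succ_ne hn hne
    exact ⟨this.2, this.1⟩
  have := dval_lt (x+1) (nextIn T x hT); have := dval_lt (x'+1) (nextIn T x hT)
  have := dval_lt x' (nextIn T x hT)
  have := dval_lt (x+1) x'; have := dval_lt (x'+1) x; have := dval_lt x' x
  omega

lemma nextIn_gap {T : Set (Fin n)} (hT : T.Nonempty) {x t : Fin n}
    (ht : t ∈ T) (htx : t ≠ x) :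
    dval x (nextIn T x hT) = 1 + dval (x+1) (nextIn T x hT) ∧
    dval x (nextIn T x hT) ≤ dval x t := by
  have hn : 2 ≤ n := two_le_of_ne htx
  have hmin : dval (x+1) (nextIn T x hT) ≤ dval (x+1) t := nextIn_min T x hT ht
  have h1 := dval_succ_ne hn htx
  have h2 := dval_tri x (x+1) (nextIn T x hT)
  have h3 := dval_lt x (nextIn T x hT)
  have h4 := dval_succ x hn
  omega

lemma gap_disjoint {T : Set (Fin n)} (hT : T.Nonempty) {x x' c : Fin n}
    (hx : x ∈ T) (hx' : x' ∈ T)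
    (h1 : dval x c < dval x (nextIn T x hT))
    (h2 : dval x' c < dval x' (nextIn T x' hT)) : x = x' := by
  by_contra hne
  have N1 := (nextIn_gap hT hx' (show x' ≠ x from fun e => hne e.symm)).2
  have N2 := (nextIn_gap hT hx hne).2
  have T1 := dval_tri x x' c
  have T2 := dval_tri x' x c
  have := dval_lt x c; have := dval_lt x' c; have := dval_lt x x'; have := dval_lt x' x
  omega

lemma compl_half {c0 c1 x : Fin n} (hne : c0 ≠ c1)
    (h : dval (c1+1) x ≤ dval (c1+1) c0) : ¬ (dval (c0+1) x ≤ dval (c0+1) c1) := by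
  have hn : 2 ≤ n := two_le_of_ne hne
  have hA2 : dval (c0+1) c1 ≤ n - 2 := dval_le_sub_two hne
  have hsucc1 := dval_succ c1 hn
  have E5 : dval (c0+1) (c1+1) = dval (c0+1) c1 + 1 := by
    have := dval_tri (c0+1) c1 (c1+1); have := dval_lt (c0+1) (c1+1); omega
  have F2 : dval (c0+1) c0 = n - 1 := dval_succ_rev c0 hn
  have F3 : dval (c1+1) c0 = n - 2 - dval (c0+1) c1 := by
    have := dval_tri (c0+1) (c1+1) c0; have := dval_lt (c1+1) c0; omega
  have T1 := dval_tri (c0+1) (c1+1) x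
  have := dval_lt (c0+1) x; have := dval_lt (c1+1) x
  omega

lemma next_in_arc {T : Set (Fin n)} (hT : T.Nonempty) {x0 x1 c0 c1 : Fin n}
    (hx0 : x0 ∈ T) (hx1 : x1 ∈ T) (hne : x0 ≠ x1)
    (h0 : dval x0 c0 < dval x0 (nextIn T x0 hT))
    (h1 : dval x1 c1 < dval x1 (nextIn T x1 hT)) :
    dval (c0+1) (nextIn T x0 hT) ≤ dval (c0+1) c1 := by
  have hn : 2 ≤ n := two_le_of_ne hne
  have hc01 : c0 ≠ c1 := by
    intro h
    exact hne (gap_disjoint hT hx0 hx1 h0 (h ▸ h1))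
  by_contra hgt
  have hA2 : dval (c0+1) c1 ≤ n - 2 := dval_le_sub_two hc01
  have P1 : dval c0 (nextIn T x0 hT) = dval x0 (nextIn T x0 hT) - dval x0 c0 ∧
      1 ≤ dval c0 (nextIn T x0 hT) := by
    have := dval_tri x0 c0 (nextIn T x0 hT); have := dval_lt c0 (nextIn T x0 hT)
    have := dval_lt x0 (nextIn T x0 hT); have := dval_lt x0 c0; omega
  have P2 : dval (c0+1) (nextIn T x0 hT) = dval c0 (nextIn T x0 hT) - 1 := by
    have := dval_tri c0 (c0+1) (nextIn T x0 hT); have := dval_succ c0 hn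
    have := dval_lt (c0+1) (nextIn T x0 hT); omega
  have P3 : dval c0 c1 = 1 + dval (c0+1) c1 := by
    have := dval_tri c0 (c0+1) c1; have := dval_succ c0 hn; have := dval_lt c0 c1; omega
  have P4 : dval x0 c1 < dval x0 (nextIn T x0 hT) := by
    have := dval_tri x0 c0 c1; have := dval_lt x0 c1
    have := dval_lt x0 (nextIn T x0 hT); have := dval_lt x0 c0; omega
  exact hne (gap_disjoint hT hx0 hx1 P4 h1)

lemma safeCuts {V V' : Set (Fin n)} (hW : (V ∪ V').Nonempty)
    (hT : ((V \ V') ∪ (V' \ V)).Nonempty)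
    (hcard : (V' \ V).ncard + 2 ≤ (V \ V').ncard) :
    ∃ c0 c1 : Fin n, c0 ≠ c1 ∧
      (¬(prevIn (V ∪ V') c0 hW ∈ V \ V' ∧ nextIn (V ∪ V') c0 hW ∈ V' \ V) ∧
       ¬(prevIn (V ∪ V') c0 hW ∈ V' \ V ∧ nextIn (V ∪ V') c0 hW ∈ V \ V')) ∧
      (¬(prevIn (V ∪ V') c1 hW ∈ V \ V' ∧ nextIn (V ∪ V') c1 hW ∈ V' \ V) ∧
       ¬(prevIn (V ∪ V') c1 hW ∈ V' \ V ∧ nextIn (V ∪ V') c1 hW ∈ V \ V')) ∧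
      (∃ t ∈ (V \ V') ∪ (V' \ V), dval (c0+1) t ≤ dval (c0+1) c1) ∧
      (∃ t ∈ (V \ V') ∪ (V' \ V), ¬ dval (c0+1) t ≤ dval (c0+1) c1) := by
  classical
  have hTW : ((V \ V') ∪ (V' \ V)) ⊆ (V ∪ V') := by
    rintro x (⟨h, _⟩ | ⟨h, _⟩)
    · exact Or.inl h
    · exact Or.inr h
  have hDD' : ∀ x : Fin n, x ∈ V \ V' → x ∈ V' \ V → False := by
    rintro x ⟨h1, h2⟩ ⟨h3, h4⟩; exact h2 h3
  by_cases htwo : ∃ x0 ∈ (V \ V') ∪ (V' \ V), ∃ x1 ∈ (V \ V') ∪ (V' \ V), x0 ≠ x1 ∧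
      ((nextIn (V ∪ V') x0 hW ∉ (V \ V') ∪ (V' \ V)) ∨
        ((x0 ∈ V \ V' ∧ nextIn (V ∪ V') x0 hW ∈ V \ V') ∨
         (x0 ∈ V' \ V ∧ nextIn (V ∪ V') x0 hW ∈ V' \ V))) ∧
      ((nextIn (V ∪ V') x1 hW ∉ (V \ V') ∪ (V' \ V)) ∨
        ((x1 ∈ V \ V' ∧ nextIn (V ∪ V') x1 hW ∈ V \ V') ∨
         (x1 ∈ V' \ V ∧ nextIn (V ∪ V') x1 hW ∈ V' \ V)))
  · obtain ⟨x0, hx0T, x1, hx1T, hne01, hdiv0, hdiv1⟩ := htwo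
    have key : ∀ x y, x ∈ (V \ V') ∪ (V' \ V) → y ∈ (V \ V') ∪ (V' \ V) → y ≠ x →
        ((nextIn (V ∪ V') x hW ∉ (V \ V') ∪ (V' \ V)) ∨
          ((x ∈ V \ V' ∧ nextIn (V ∪ V') x hW ∈ V \ V') ∨
           (x ∈ V' \ V ∧ nextIn (V ∪ V') x hW ∈ V' \ V))) →
        ∃ c, (¬(prevIn (V ∪ V') c hW ∈ V \ V' ∧ nextIn (V ∪ V') c hW ∈ V' \ V) ∧
              ¬(prevIn (V ∪ V') c hW ∈ V' \ V ∧ nextIn (V ∪ V') c hW ∈ V \ V')) ∧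
             dval x c < dval x (nextIn ((V \ V') ∪ (V' \ V)) x hT) := by
      intro x y hx hy hyx hdiv
      have hgap := nextIn_gap hT hy hyx
      by_cases hb : nextIn (V ∪ V') x hW ∈ (V \ V') ∪ (V' \ V)
      · refine ⟨x, ?_, ?_⟩
        · have hpx : prevIn (V ∪ V') x hW = x := prevIn_self (V ∪ V') x hW (hTW hx)
          have hcases : (x ∈ V \ V' ∧ nextIn (V ∪ V') x hW ∈ V \ V') ∨
              (x ∈ V' \ V ∧ nextIn (V ∪ V') x hW ∈ V' \ V) := by
            rcases hdiv with h | h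
            · exact absurd hb h
            · exact h
          rw [hpx]
          constructor
          · rintro ⟨h1, h2⟩
            rcases hcases with ⟨_, h3⟩ | ⟨h3, _⟩
            · exact hDD' _ h3 h2
            · exact hDD' _ h1 h3
          · rintro ⟨h1, h2⟩
            rcases hcases with ⟨h3, _⟩ | ⟨_, h3⟩
            · exact hDD' _ h3 h1
            · exact hDD' _ h2 h3
        · have h6 := hgap.1
          simp only [dval_self]
          omega
      · refine ⟨nextIn (V ∪ V') x hW, ?_, ?_⟩
        · have hpb : prevIn (V ∪ V') (nextIn (V ∪ V') x hW) hW = nextIn (V ∪ V') x hW :=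
            prevIn_self (V ∪ V') _ hW (nextIn_mem (V ∪ V') x hW)
          rw [hpb]
          constructor
          · rintro ⟨h1, _⟩; exact hb (Or.inl h1)
          · rintro ⟨h1, _⟩; exact hb (Or.inr h1)
        · have hn : 2 ≤ n := two_le_of_ne hyx
          have hmin : dval (x+1) (nextIn (V ∪ V') x hW) ≤
              dval (x+1) (nextIn ((V \ V') ∪ (V' \ V)) x hT) :=
            nextIn_min (V ∪ V') x hW (hTW (nextIn_mem ((V \ V') ∪ (V' \ V)) x hT))
          have hneq : dval (x+1) (nextIn (V ∪ V') x hW) ≠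
              dval (x+1) (nextIn ((V \ V') ∪ (V' \ V)) x hT) := by
            intro h
            exact hb (dval_inj h ▸ nextIn_mem ((V \ V') ∪ (V' \ V)) x hT)
          have h2 := dval_tri x (x+1) (nextIn (V ∪ V') x hW)
          have h3 := dval_lt x (nextIn (V ∪ V') x hW)
          have h4 := dval_succ x hn
          have h5 := dval_lt (x+1) (nextIn ((V \ V') ∪ (V' \ V)) x hT)
          have h6 := hgap.1
          omega
    obtain ⟨c0, hsafe0, hgap0⟩ := key x0 x1 hx0T hx1T (Ne.symm hne01) hdiv0
    obtain ⟨c1, hsafe1, hgap1⟩ := key x1 x0 hx1T hx0T hne01 hdiv1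
    have hc01 : c0 ≠ c1 := by
      intro h
      exact hne01 (gap_disjoint hT hx0T hx1T hgap0 (h ▸ hgap1))
    exact ⟨c0, c1, hc01, hsafe0, hsafe1,
      ⟨nextIn ((V \ V') ∪ (V' \ V)) x0 hT, nextIn_mem _ x0 hT,
        next_in_arc hT hx0T hx1T hne01 hgap0 hgap1⟩,
      ⟨nextIn ((V \ V') ∪ (V' \ V)) x1 hT, nextIn_mem _ x1 hT,
        compl_half hc01 (next_in_arc hT hx1T hx0T (Ne.symm hne01) hgap1 hgap0)⟩⟩
  · -- counting contradiction
    exfalso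
    push_neg at htwo
    have hexuniq : ∃ x0 : Fin n, ∀ x ∈ (V \ V') ∪ (V' \ V), x ≠ x0 →
        (nextIn (V ∪ V') x hW ∈ (V \ V') ∪ (V' \ V)) ∧
        ¬(x ∈ V \ V' ∧ nextIn (V ∪ V') x hW ∈ V \ V') ∧
        ¬(x ∈ V' \ V ∧ nextIn (V ∪ V') x hW ∈ V' \ V) := by
      by_cases hx : ∃ x ∈ (V \ V') ∪ (V' \ V),
          ((nextIn (V ∪ V') x hW ∉ (V \ V') ∪ (V' \ V)) ∨
            ((x ∈ V \ V' ∧ nextIn (V ∪ V') x hW ∈ V \ V') ∨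
             (x ∈ V' \ V ∧ nextIn (V ∪ V') x hW ∈ V' \ V)))
      · obtain ⟨x0, hx0T, hx0D⟩ := hx
        refine ⟨x0, fun x hxT hne => ?_⟩
        have h' := htwo x0 hx0T x hxT (Ne.symm hne) hx0D
        exact ⟨h'.1, fun hc => h'.2.1 hc.1 hc.2, fun hc => h'.2.2 hc.1 hc.2⟩
      · push_neg at hx
        refine ⟨hT.some, fun x hxT _ => ?_⟩
        have h' := hx x hxT
        exact ⟨h'.1, fun hc => h'.2.1 hc.1 hc.2, fun hc => h'.2.2 hc.1 hc.2⟩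
    obtain ⟨x0, hnd⟩ := hexuniq
    have hmap : ∀ x ∈ (V \ V') \ {x0}, nextIn ((V \ V') ∪ (V' \ V)) x hT ∈ V' \ V := by
      rintro x ⟨hxD, hxne⟩
      have hxT : x ∈ (V \ V') ∪ (V' \ V) := Or.inl hxD
      obtain ⟨h1, h2, h3⟩ := hnd x hxT (by simpa using hxne)
      have heq : nextIn ((V \ V') ∪ (V' \ V)) x hT = nextIn (V ∪ V') x hW :=
        nextIn_eq_of_subset (V ∪ V') x hW hT hTW h1
      rw [heq]
      rcases h1 with h | h
      · exact absurd ⟨hxD, h⟩ h2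
      · exact h
    have hinj : Set.InjOn (fun x => nextIn ((V \ V') ∪ (V' \ V)) x hT) ((V \ V') \ {x0}) := by
      intro a ha b hb hab
      exact nextIn_inj hT (Or.inl ha.1) (Or.inl hb.1) hab
    have h1 : ((V \ V') \ {x0}).ncard ≤ (V' \ V).ncard := by
      calc ((V \ V') \ {x0}).ncard
          = ((fun x => nextIn ((V \ V') ∪ (V' \ V)) x hT) '' ((V \ V') \ {x0})).ncard :=
            (Set.ncard_image_of_injOn hinj).symm
        _ ≤ (V' \ V).ncard := Set.ncard_le_ncard
            (by rintro y ⟨x, hx, rfl⟩; exact hmap x hx) (Set.toFinite _)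
    have h2 : (V \ V').ncard ≤ ((V \ V') \ {x0}).ncard + 1 := by
      have hsub : (V \ V') ⊆ ((V \ V') \ {x0}) ∪ {x0} := by
        intro x hx
        by_cases h : x = x0
        · exact Or.inr (by simp [h])
        · exact Or.inl ⟨hx, by simpa using h⟩
      calc (V \ V').ncard ≤ (((V \ V') \ {x0}) ∪ {x0}).ncard :=
            Set.ncard_le_ncard hsub (Set.toFinite _)
        _ ≤ ((V \ V') \ {x0}).ncard + ({x0} : Set (Fin n)).ncard := Set.ncard_union_le _ _
        _ = ((V \ V') \ {x0}).ncard + 1 := by simp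
    omega

end Stmt12Aux

namespace Stmt12Aux

lemma cover_sum {m n : ℕ} {A : Matrix (Fin m) (Fin n) ℝ} (hA : IsBinaryMatrix A)
    {x : Fin n → ℝ} (hx : ∀ j, x j = 0 ∨ x j = 1) {i : Fin m} {j0 : Fin n}
    (hj0 : A i j0 ≠ 0) (hx0 : x j0 ≠ 0) : 1 ≤ ∑ j, A i j * x j := by
  have hterm : A i j0 * x j0 = 1 := by
    rcases hA i j0 with h | h
    · exact absurd h hj0
    · rcases hx j0 with h' | h'
      · exact absurd h' hx0
      · rw [h, h']; ring
  calc (1 : ℝ) = A i j0 * x j0 := hterm.symm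
    _ ≤ ∑ j, A i j * x j := Finset.single_le_sum (f := fun j => A i j * x j)
        (fun j _ => by
          rcases hA i j with h | h <;> rcases hx j with h' | h' <;> simp [h, h'])
        (Finset.mem_univ j0)

lemma cover_mem {m n : ℕ} {A : Matrix (Fin m) (Fin n) ℝ}
    {x : Fin n → ℝ} {i : Fin m} (hcov : 1 ≤ ∑ j, A i j * x j) :
    ∃ j, A i j ≠ 0 ∧ x j ≠ 0 := by
  have hne : (∑ j, A i j * x j) ≠ 0 := by intro h; rw [h] at hcov; linarith
  obtain ⟨j, _, hj⟩ := Finset.exists_ne_zero_of_sum_ne_zero hne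
  exact ⟨j, fun h => hj (by rw [h]; ring), fun h => hj (by rw [h]; ring)⟩

/-- Vertices of `Qstar` are binary vectors. -/
lemma vert_binary {m n : ℕ} {A : Matrix (Fin m) (Fin n) ℝ} (hA : IsBinaryMatrix A)
    {v : Fin n → ℝ} (hv : v ∈ (Qstar A).extremePoints ℝ) :
    ∀ j, v j = 0 ∨ v j = 1 := by
  classical
  obtain ⟨hnat, hcov⟩ := extremePoints_convexHull_subset (𝕜 := ℝ)
    (A := {x : Fin n → ℝ | (∀ j, ∃ k : ℕ, x j = k) ∧ ∀ i, 1 ≤ ∑ j, A i j * x j}) hv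
  have hvnn : ∀ l, (0:ℝ) ≤ v l := fun l => by
    obtain ⟨k', hk'⟩ := hnat l; rw [hk']; positivity
  intro j
  by_contra hj
  push_neg at hj
  obtain ⟨k, hk⟩ := hnat j
  have hk2 : 2 ≤ k := by
    rcases k with _ | k
    · exact absurd (by simpa using hk) hj.1
    rcases k with _ | k
    · exact absurd (by simpa using hk) hj.2
    omega
  set e : Fin n → ℝ := fun l => if l = j then 1 else 0 with hedef
  have h1 : ∀ i, ∑ l, A i l * e l = A i j := by
    intro i
    rw [Finset.sum_eq_single j]
    · simp [hedef]
    · intro b _ hb; simp [hedef, hb]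
    · intro h; exact absurd (Finset.mem_univ j) h
  have hadd : ∀ (i : Fin m) (w : Fin n → ℝ),
      ∑ l, A i l * (w l + e l) = (∑ l, A i l * w l) + A i j := by
    intro i w
    have hc : ∀ l ∈ Finset.univ, A i l * (w l + e l) = A i l * w l + A i l * e l :=
      fun l _ => by ring
    rw [Finset.sum_congr rfl hc, Finset.sum_add_distrib, h1]
  have hsub : ∀ (i : Fin m) (w : Fin n → ℝ),
      ∑ l, A i l * (w l - e l) = (∑ l, A i l * w l) - A i j := by
    intro i w
    have hc : ∀ l ∈ Finset.univ, A i l * (w l - e l) = A i l * w l - A i l * e l :=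
      fun l _ => by ring
    rw [Finset.sum_congr rfl hc, Finset.sum_sub_distrib, h1]
  have hsumlb : ∀ i : Fin m, A i j ≠ 0 → (2:ℝ) ≤ ∑ l, A i l * v l := by
    intro i hij
    have hAij : A i j = 1 := (hA i j).resolve_left hij
    have hle : A i j * v j ≤ ∑ l, A i l * v l :=
      Finset.single_le_sum (f := fun l => A i l * v l) (fun l _ => by
        rcases hA i l with h | h <;> simp [h, hvnn l]) (Finset.mem_univ j)
    rw [hAij, one_mul, hk] at hle
    have : (2:ℝ) ≤ (k:ℝ) := by exact_mod_cast hk2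
    linarith
  have hyG : (fun l => v l - e l) ∈ {x : Fin n → ℝ |
      (∀ j, ∃ k : ℕ, x j = k) ∧ ∀ i, 1 ≤ ∑ j, A i j * x j} := by
    constructor
    · intro l
      by_cases hl : l = j
      · refine ⟨k - 1, ?_⟩
        subst hl
        simp only [hedef, if_pos rfl, hk]
        have : ((k - 1 : ℕ) : ℝ) = (k:ℝ) - 1 := by
          have : (1:ℕ) ≤ k := by omega
          push_cast [Nat.cast_sub this]
          ring
        rw [this]
      · obtain ⟨k', hk'⟩ := hnat l
        exact ⟨k', by simp [hedef, hl, hk']⟩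
    · intro i
      rw [hsub i v]
      rcases hA i j with h | h
      · rw [h, sub_zero]; exact hcov i
      · have := hsumlb i (by rw [h]; norm_num)
        rw [h]; linarith
  have hzG : (fun l => v l + e l) ∈ {x : Fin n → ℝ |
      (∀ j, ∃ k : ℕ, x j = k) ∧ ∀ i, 1 ≤ ∑ j, A i j * x j} := by
    constructor
    · intro l
      by_cases hl : l = j
      · refine ⟨k + 1, ?_⟩
        subst hl
        simp only [hedef, if_pos rfl, hk]
        push_cast
        ring
      · obtain ⟨k', hk'⟩ := hnat l
        exact ⟨k', by simp [hedef, hl, hk']⟩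
    · intro i
      rw [hadd i v]
      have h0 : (0:ℝ) ≤ A i j := by rcases hA i j with h | h <;> simp [h]
      linarith [hcov i]
  have hopen : v ∈ openSegment ℝ (fun l => v l - e l) (fun l => v l + e l) := by
    refine ⟨1/2, 1/2, by norm_num, by norm_num, by norm_num, ?_⟩
    funext l
    simp only [Pi.add_apply, Pi.smul_apply, smul_eq_mul]
    ring
  have hex := (mem_extremePoints.mp hv).2 _
    (subset_convexHull ℝ _ hyG) _ (subset_convexHull ℝ _ hzG) hopen
  have := congrFun hex.1 j
  simp only [hedef, if_pos rfl] at this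
  linarith

end Stmt12Aux

namespace Stmt12Aux

lemma oneSide {m n : ℕ} [NeZero n] (A : Matrix (Fin m) (Fin n) ℝ)
    (hstd : StandardAssumptions A) (hcirc : RowCircular A)
    (v v' : Fin n → ℝ) (hadj : AdjacentVerts (Qstar A) v v') :
    (supp v).ncard ≤ (supp v').ncard + 1 := by
  classical
  obtain ⟨hvv', hv, hv', hext⟩ := hadj
  have hA : IsBinaryMatrix A := hstd.1
  have hvbin := vert_binary hA hv
  have hv'bin := vert_binary hA hv'
  have hvG := extremePoints_convexHull_subset (𝕜 := ℝ)
    (A := {x : Fin n → ℝ | (∀ j, ∃ k : ℕ, x j = k) ∧ ∀ i, 1 ≤ ∑ j, A i j * x j}) hv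
  have hv'G := extremePoints_convexHull_subset (𝕜 := ℝ)
    (A := {x : Fin n → ℝ | (∀ j, ∃ k : ℕ, x j = k) ∧ ∀ i, 1 ≤ ∑ j, A i j * x j}) hv'
  obtain ⟨hvnat, hvcov⟩ := hvG
  obtain ⟨hv'nat, hv'cov⟩ := hv'G
  by_contra hcon
  push_neg at hcon
  have hcard : (supp v' \ supp v).ncard + 2 ≤ (supp v \ supp v').ncard := by
    have h1 := Set.ncard_inter_add_ncard_diff_eq_ncard (supp v) (supp v')
    have h2 := Set.ncard_inter_add_ncard_diff_eq_ncard (supp v') (supp v)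
    rw [Set.inter_comm] at h2
    omega
  have hTne : ((supp v \ supp v') ∪ (supp v' \ supp v)).Nonempty := by
    have h0 : (supp v \ supp v').ncard ≠ 0 := by omega
    exact (Set.nonempty_of_ncard_ne_zero h0).mono Set.subset_union_left
  have hWne : (supp v ∪ supp v').Nonempty := by
    obtain ⟨x, hx⟩ := hTne
    rcases hx with ⟨h, _⟩ | ⟨h, _⟩
    exacts [⟨x, Or.inl h⟩, ⟨x, Or.inr h⟩]
  obtain ⟨c0, c1, hc01, hsafe0, hsafe1, ⟨t1, ht1T, ht1S⟩, ⟨t2, ht2T, ht2S⟩⟩ :=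
    safeCuts hWne hTne hcard
  set y : Fin n → ℝ := fun jj => if jj ∈ arc (c0+1) c1 then v jj else v' jj with hydef
  set z : Fin n → ℝ := fun jj => if jj ∈ arc (c0+1) c1 then v' jj else v jj with hzdef
  have hybin : ∀ jj, y jj = 0 ∨ y jj = 1 := fun jj => by
    by_cases h : jj ∈ arc (c0+1) c1
    · simpa [hydef, h] using hvbin jj
    · simpa [hydef, h] using hv'bin jj
  have hzbin : ∀ jj, z jj = 0 ∨ z jj = 1 := fun jj => by
    by_cases h : jj ∈ arc (c0+1) c1
    · simpa [hzdef, h] using hv'bin jj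
    · simpa [hzdef, h] using hvbin jj
  have hWVV' : (supp v ∪ supp v') ⊆ supp v' ∪ supp v := by
    rintro x (h | h); exacts [Or.inr h, Or.inl h]
  have hycov : ∀ i, 1 ≤ ∑ jj, A i jj * y jj := by
    intro i
    by_cases hex : ∃ x, A i x ≠ 0 ∧ y x ≠ 0
    · obtain ⟨x, hAx, hyx⟩ := hex
      exact cover_sum hA hybin hAx hyx
    · exfalso
      push_neg at hex
      obtain ⟨a, b, harc⟩ := hcirc i
      obtain ⟨d, hAd, hvd⟩ := cover_mem (hvcov i)
      obtain ⟨q, hAq, hv'q⟩ := cover_mem (hv'cov i)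
      have hdarc : d ∈ arc a b := harc ▸ hAd
      have hqarc : q ∈ arc a b := harc ▸ hAq
      have hmemrow : ∀ x : Fin n, x ∈ arc a b → A i x ≠ 0 := by
        intro x hx
        have : x ∈ rowSupp A i := harc ▸ hx
        exact this
      refine zcov hWne (Set.subset_union_right) (Set.subset_union_left) hWVV' hc01
          (fun h => hsafe1.2 ⟨⟨h.1, h.2.1⟩, ⟨h.2.2.1, h.2.2.2⟩⟩)
          (fun h => hsafe0.1 ⟨⟨h.1, h.2.1⟩, ⟨h.2.2.1, h.2.2.2⟩⟩)
          hqarc hdarc hv'q hvd ?_ ?_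
      · intro x hxarc hxv'
        by_contra hxS
        have h0 := hex x (hmemrow x hxarc)
        rw [hydef] at h0
        simp only [if_neg hxS] at h0
        exact hxv' h0
      · intro x hxarc hxv hxS
        have h0 := hex x (hmemrow x hxarc)
        rw [hydef] at h0
        simp only [if_pos hxS] at h0
        exact hxv h0
  have hzcov : ∀ i, 1 ≤ ∑ jj, A i jj * z jj := by
    intro i
    by_cases hex : ∃ x, A i x ≠ 0 ∧ z x ≠ 0
    · obtain ⟨x, hAx, hzx⟩ := hex
      exact cover_sum hA hzbin hAx hzx
    · exfalso
      push_neg at hex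
      obtain ⟨a, b, harc⟩ := hcirc i
      obtain ⟨d, hAd, hvd⟩ := cover_mem (hvcov i)
      obtain ⟨q, hAq, hv'q⟩ := cover_mem (hv'cov i)
      have hdarc : d ∈ arc a b := harc ▸ hAd
      have hqarc : q ∈ arc a b := harc ▸ hAq
      have hmemrow : ∀ x : Fin n, x ∈ arc a b → A i x ≠ 0 := by
        intro x hx
        have : x ∈ rowSupp A i := harc ▸ hx
        exact this
      refine zcov hWne (Set.subset_union_left) (Set.subset_union_right) subset_rfl hc01
          (fun h => hsafe1.1 ⟨⟨h.1, h.2.1⟩, ⟨h.2.2.1, h.2.2.2⟩⟩)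
          (fun h => hsafe0.2 ⟨⟨h.1, h.2.1⟩, ⟨h.2.2.1, h.2.2.2⟩⟩)
          hdarc hqarc hvd hv'q ?_ ?_
      · intro x hxarc hxv
        by_contra hxS
        have h0 := hex x (hmemrow x hxarc)
        rw [hzdef] at h0
        simp only [if_neg hxS] at h0
        exact hxv h0
      · intro x hxarc hxv' hxS
        have h0 := hex x (hmemrow x hxarc)
        rw [hzdef] at h0
        simp only [if_pos hxS] at h0
        exact hxv' h0
  have hynat : ∀ jj, ∃ k : ℕ, y jj = k := fun jj => by
    rcases hybin jj with h | h
    · exact ⟨0, by simp [h]⟩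
    · exact ⟨1, by simp [h]⟩
  have hznat : ∀ jj, ∃ k : ℕ, z jj = k := fun jj => by
    rcases hzbin jj with h | h
    · exact ⟨0, by simp [h]⟩
    · exact ⟨1, by simp [h]⟩
  have hyQ : y ∈ Qstar A := subset_convexHull ℝ _ ⟨hynat, hycov⟩
  have hzQ : z ∈ Qstar A := subset_convexHull ℝ _ ⟨hznat, hzcov⟩
  have hmid : (fun jj => (v jj + v' jj)/2) ∈ segment ℝ v v' := by
    refine ⟨1/2, 1/2, by norm_num, by norm_num, by norm_num, ?_⟩
    funext jj
    simp only [Pi.add_apply, Pi.smul_apply, smul_eq_mul]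
    ring
  have hopen : (fun jj => (v jj + v' jj)/2) ∈ openSegment ℝ y z := by
    refine ⟨1/2, 1/2, by norm_num, by norm_num, by norm_num, ?_⟩
    funext jj
    simp only [Pi.add_apply, Pi.smul_apply, smul_eq_mul, hydef, hzdef]
    by_cases h : jj ∈ arc (c0+1) c1
    · simp only [if_pos h]; ring
    · simp only [if_neg h]; ring
  have hseg := hext.2 hyQ hzQ hmid hopen
  obtain ⟨av, bv, hav, hbv, hab, heq⟩ := hseg
  have ht1S' : t1 ∈ arc (c0+1) c1 := mem_arc_iff.mpr ht1S
  have ht2S' : t2 ∉ arc (c0+1) c1 := fun h => ht2S (mem_arc_iff.mp h)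
  have hyt1 : y t1 = v t1 := by rw [hydef]; simp [ht1S']
  have hyt2 : y t2 = v' t2 := by rw [hydef]; simp [ht2S']
  have heq1 := congrFun heq t1
  simp only [Pi.add_apply, Pi.smul_apply, smul_eq_mul] at heq1
  rw [hyt1] at heq1
  have hbv0 : bv = 0 := by
    rcases ht1T with ⟨h1, h2⟩ | ⟨h1, h2⟩
    · have hv1 : v t1 = 1 := (hvbin t1).resolve_left h1
      have hv'0 : v' t1 = 0 := not_not.mp h2
      rw [hv1, hv'0] at heq1
      linarith
    · have hv'1 : v' t1 = 1 := (hv'bin t1).resolve_left h1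
      have hv0 : v t1 = 0 := not_not.mp h2
      rw [hv0, hv'1] at heq1
      linarith
  have hyv : y = v := by
    have hav1 : av = 1 := by linarith
    funext jj
    have h := congrFun heq jj
    simp only [Pi.add_apply, Pi.smul_apply, smul_eq_mul] at h
    rw [hbv0, hav1] at h
    linarith
  have h2eq : v' t2 = v t2 := by rw [← hyt2, hyv]
  rcases ht2T with ⟨h1, h2⟩ | ⟨h1, h2⟩
  · have hv'0 : v' t2 = 0 := not_not.mp h2
    exact h1 (by rw [← h2eq]; exact hv'0)
  · exact h1 (by rw [h2eq]; exact not_not.mp h2)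

end Stmt12Aux


/-- for row circular `A`, supports of adjacent vertices of `Q*(A)` have
cardinalities differing by at most one. -/
theorem stmt12 {m n : ℕ} [NeZero n] (A : Matrix (Fin m) (Fin n) ℝ)
    (hstd : StandardAssumptions A) (hcirc : RowCircular A)
    (v v' : Fin n → ℝ) (hadj : AdjacentVerts (Qstar A) v v') :
    (supp v).ncard ≤ (supp v').ncard + 1 ∧ (supp v').ncard ≤ (supp v).ncard + 1 := by
  constructor
  · exact Stmt12Aux.oneSide A hstd hcirc v v' hadj
  · refine Stmt12Aux.oneSide A hstd hcirc v' v ⟨hadj.1.symm, hadj.2.2.1, hadj.2.1, ?_⟩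
    rw [segment_symm]
    exact hadj.2.2.2
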